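/- Let v be a cut-vertex of a graph G, and let C₁, …, C_l be the subgraphs induced by v together with each of the l components of G − v (so each C_j contains its own copy of v). Then x^{l−1} · J(G) = Π_{j=1}^{l} J(C_j | v ∈ W) + x^{l−1} y Π_{j=1}^{l} J(C_j − v) + x^{l−1} (1−y) Π_{j=1}^{l} J(C_j | N_{C_j}[v] ∩ W = ∅). -/

import Mathlib

open Finset
open scoped Classical

/-- External neighbourhood N(W) = N[W] \ W of a vertex subset. -/
noncomputable def extN {V : Type} [Fintype V] (G : SimpleGraph V) (W : Finset V) : Finset V :=
  Finset.univ.filter (fun v => v ∉ W ∧ ∃ w ∈ W, G.Adj v w)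

/-- The bivariate domination polynomial J(G;x,y) = ∑_{W ⊆ V} x^|W| y^|N(W)|. -/
noncomputable def JP {V : Type} [Fintype V] (G : SimpleGraph V) (x y : ℝ) : ℝ :=
  ∑ W : Finset V, x ^ W.card * y ^ (extN G W).card

/-- Vertex deletion G − a. -/
noncomputable def Gdel {V : Type} (G : SimpleGraph V) (a : V) : SimpleGraph {v : V // v ≠ a} :=
  G.induce {v : V | v ≠ a}

/-- Deletion of a set of vertices. -/
noncomputable def GdelSet {V : Type} (G : SimpleGraph V) (S : Set V) : SimpleGraph {v : V // v ∉ S} :=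
  G.induce {v : V | v ∉ S}

/-- Vertex contraction G∖a: join all neighbours of a, then delete a. -/
noncomputable def Gcon {V : Type} (G : SimpleGraph V) (a : V) : SimpleGraph {v : V // v ≠ a} where
  Adj u v := u ≠ v ∧ (G.Adj u.val v.val ∨ (G.Adj u.val a ∧ G.Adj a v.val))
  symm := ⟨fun _ _ ⟨h1, h2⟩ =>
    ⟨fun e => h1 e.symm, h2.imp G.adj_symm (fun ⟨p, q⟩ => ⟨G.adj_symm q, G.adj_symm p⟩)⟩⟩
  loopless := ⟨fun _ h => h.1 rfl⟩

/-- The piece of `G` induced by a cut vertex `v` together with the connected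
component `c` of `G − v`. -/
noncomputable def Cpart {V : Type} [Fintype V] (G : SimpleGraph V) (v : V)
    (c : (Gdel G v).ConnectedComponent) :
    SimpleGraph {w : V // w = v ∨ ∃ h : w ≠ v, (Gdel G v).connectedComponentMk ⟨w, h⟩ = c} :=
  G.induce {w : V | w = v ∨ ∃ h : w ≠ v, (Gdel G v).connectedComponentMk ⟨w, h⟩ = c}

/-- The copy of the cut vertex `v` inside the piece `Cpart G v c`. -/
noncomputable def vcopy {V : Type} [Fintype V] (G : SimpleGraph V) (v : V)
    (c : (Gdel G v).ConnectedComponent) :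
    {w : V // w = v ∨ ∃ h : w ≠ v, (Gdel G v).connectedComponentMk ⟨w, h⟩ = c} :=
  ⟨v, Or.inl rfl⟩

lemma Gdel_adj {V : Type} (G : SimpleGraph V) (a : V) (p q : {v : V // v ≠ a}) :
    (Gdel G a).Adj p q ↔ G.Adj p.val q.val := Iff.rfl

lemma mem_extN {V : Type} [Fintype V] (G : SimpleGraph V) (W : Finset V) (u : V) :
    u ∈ extN G W ↔ u ∉ W ∧ ∃ w ∈ W, G.Adj u w := by simp [extN]

lemma extN_del_map {U : Type} [Fintype U] [DecidableEq U] (H : SimpleGraph U) (a : U)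
    [Fintype {u : U // u ≠ a}]
    (W' : Finset {u : U // u ≠ a}) :
    (extN (Gdel H a) W').map (Function.Embedding.subtype _)
      = (extN H (W'.map (Function.Embedding.subtype _))).erase a := by
  ext u
  simp only [mem_map, mem_extN, mem_erase, Function.Embedding.coe_subtype, Gdel_adj]
  constructor
  · rintro ⟨u', ⟨hu1, w', hw', hadj⟩, rfl⟩
    exact ⟨u'.2, ⟨fun h => by
      obtain ⟨z, hz, hze⟩ := h; exact hu1 ((Subtype.ext hze) ▸ hz),
      ⟨w'.val, ⟨w', hw', rfl⟩, hadj⟩⟩⟩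
  · rintro ⟨hne, hu1, w, ⟨w', hw', rfl⟩, hadj⟩
    exact ⟨⟨u, hne⟩, ⟨fun h => hu1 ⟨⟨u, hne⟩, h, rfl⟩, ⟨w', hw', hadj⟩⟩, rfl⟩

lemma JP_del {U : Type} [Fintype U] [DecidableEq U] (H : SimpleGraph U) (a : U)
    [Fintype {u : U // u ≠ a}] (x y : ℝ)
    [DecidablePred fun W : Finset U => a ∉ W] :
    JP (Gdel H a) x y
      = ∑ W ∈ Finset.univ.filter (fun W : Finset U => a ∉ W),
          x ^ W.card * y ^ ((extN H W).erase a).card := by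
  unfold JP
  refine Finset.sum_nbij' (fun W' => W'.map (Function.Embedding.subtype _))
    (fun W => W.subtype _) ?_ ?_ ?_ ?_ ?_
  · intro W' _
    simp only [mem_filter, mem_univ, true_and, mem_map, Function.Embedding.coe_subtype]
    rintro ⟨w', _, hw⟩; exact w'.2 hw
  · intro W _; exact mem_univ _
  · intro W' _
    ext u
    simp only [mem_subtype, mem_map, Function.Embedding.coe_subtype]
    constructor
    · rintro ⟨w', hw', he⟩; exact (Subtype.ext he) ▸ hw'
    · intro h; exact ⟨u, h, rfl⟩
  · intro W hW
    simp only [mem_filter, mem_univ, true_and] at hW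
    show (W.subtype _).map _ = W
    rw [Finset.subtype_map]
    exact Finset.filter_eq_self.2 (fun w hw he => hW (he ▸ hw))
  · intro W' _
    rw [← extN_del_map, Finset.card_map, Finset.card_map]

section Piece
variable {V : Type} [Fintype V] (G : SimpleGraph V) (v : V)

abbrev Pc (c : (Gdel G v).ConnectedComponent) (w : V) : Prop :=
  w = v ∨ ∃ h : w ≠ v, (Gdel G v).connectedComponentMk ⟨w, h⟩ = c

lemma Cpart_adj (c : (Gdel G v).ConnectedComponent) (p q : {w : V // Pc G v c w}) :
    (Cpart G v c).Adj p q ↔ G.Adj p.val q.val := Iff.rfl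

lemma Pc_iff (c : (Gdel G v).ConnectedComponent) {w : V} (h : w ≠ v) :
    Pc G v c w ↔ (Gdel G v).connectedComponentMk ⟨w, h⟩ = c := by
  constructor
  · rintro (rfl | ⟨h', hc⟩)
    · exact absurd rfl h
    · exact hc
  · intro hc; exact Or.inr ⟨h, hc⟩

lemma adj_comp_eq {a b : V} (ha : a ≠ v) (hb : b ≠ v) (h : G.Adj a b) :
    (Gdel G v).connectedComponentMk ⟨a, ha⟩ = (Gdel G v).connectedComponentMk ⟨b, hb⟩ :=
  SimpleGraph.ConnectedComponent.sound
    (((Gdel_adj G v ⟨a, ha⟩ ⟨b, hb⟩).2 h).reachable)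

noncomputable def rMap (c : (Gdel G v).ConnectedComponent) (W : Finset V) :
    Finset {w : V // Pc G v c w} :=
  Finset.univ.filter (fun u => u.val ∈ W)

lemma mem_rMap {c : (Gdel G v).ConnectedComponent} {W : Finset V} {u : {w : V // Pc G v c w}} :
    u ∈ rMap G v c W ↔ u.val ∈ W := by simp [rMap]

lemma rMap_map (c : (Gdel G v).ConnectedComponent) (W : Finset V) :
    (rMap G v c W).map (Function.Embedding.subtype _) = W.filter (fun w => Pc G v c w) := by
  ext w
  simp only [mem_map, Function.Embedding.coe_subtype, mem_filter, mem_rMap]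
  constructor
  · rintro ⟨u, hu, rfl⟩; exact ⟨hu, u.2⟩
  · rintro ⟨hw, hp⟩; exact ⟨⟨w, hp⟩, hw, rfl⟩

lemma card_rMap (c : (Gdel G v).ConnectedComponent) (W : Finset V) :
    (rMap G v c W).card = (W.filter (fun w => Pc G v c w)).card := by
  rw [← rMap_map, Finset.card_map]

lemma sum_card_filter (W : Finset V) :
    ∑ c : (Gdel G v).ConnectedComponent, (W.filter (fun w => Pc G v c w)).card
      = ∑ w ∈ W, (if w = v then Fintype.card ((Gdel G v).ConnectedComponent) else 1) := by
  simp_rw [Finset.card_filter]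
  rw [Finset.sum_comm]
  refine Finset.sum_congr rfl (fun w _ => ?_)
  by_cases h : w = v
  · subst h
    rw [Finset.sum_congr rfl (fun c _ => if_pos (Or.inl rfl))]
    simp [Finset.card_univ]
  · rw [if_neg h]
    have key : ∀ c : (Gdel G v).ConnectedComponent,
        Pc G v c w ↔ c = (Gdel G v).connectedComponentMk ⟨w, h⟩ := fun c => by
      rw [Pc_iff G v c h]; exact eq_comm
    simp_rw [key]
    simp

lemma sum_card_rMap_notmem (W : Finset V) (hv : v ∉ W) :
    ∑ c : (Gdel G v).ConnectedComponent, (rMap G v c W).card = W.card := by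
  simp_rw [card_rMap, sum_card_filter]
  rw [Finset.sum_congr rfl (fun w hw => if_neg (fun he : w = v => hv (he ▸ hw)))]
  simp

lemma sum_card_rMap_mem (W : Finset V) (hv : v ∈ W) :
    ∑ c : (Gdel G v).ConnectedComponent, (rMap G v c W).card + 1
      = W.card + Fintype.card ((Gdel G v).ConnectedComponent) := by
  simp_rw [card_rMap, sum_card_filter]
  rw [← Finset.sum_erase_add _ _ hv, if_pos rfl]
  rw [Finset.sum_congr rfl (fun w hw => if_neg (Finset.ne_of_mem_erase hw))]
  simp only [Finset.sum_const, smul_eq_mul, mul_one, Finset.card_erase_of_mem hv]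
  have : 1 ≤ W.card := Finset.card_pos.2 ⟨v, hv⟩ 
  omega


lemma extN_rMap_erase (c : (Gdel G v).ConnectedComponent) (W : Finset V) :
    (extN (Cpart G v c) (rMap G v c W)).erase (vcopy G v c)
      = rMap G v c ((extN G W).erase v) := by
  ext u
  simp only [Finset.mem_erase, mem_extN, mem_rMap, Cpart_adj]
  constructor
  · rintro ⟨hne, hu, w', hw', hadj⟩
    exact ⟨fun he => hne (Subtype.ext he), hu, w'.val, hw', hadj⟩
  · rintro ⟨hne, hu, w, hw, hadj⟩
    refine ⟨fun he => hne (congrArg Subtype.val he), hu, ?_⟩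
    by_cases hwv : w = v
    · exact ⟨⟨w, Or.inl hwv⟩, hw, hadj⟩
    · exact ⟨⟨w, Or.inr ⟨hwv, (adj_comp_eq G v hwv hne hadj.symm).trans
        ((Pc_iff G v c hne).1 u.2)⟩⟩, hw, hadj⟩

lemma sum_card_extN (W : Finset V) :
    ∑ c : (Gdel G v).ConnectedComponent,
        ((extN (Cpart G v c) (rMap G v c W)).erase (vcopy G v c)).card
      = ((extN G W).erase v).card := by
  simp_rw [extN_rMap_erase]
  exact sum_card_rMap_notmem G v _ (Finset.notMem_erase v _)

lemma vcopy_not_mem_extN_of_mem (c : (Gdel G v).ConnectedComponent) {W : Finset V}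
    (h : v ∈ W) : vcopy G v c ∉ extN (Cpart G v c) (rMap G v c W) := by
  rw [mem_extN]
  push_neg
  intro hn
  exact absurd ((mem_rMap G v).2 h) hn

lemma vcopy_not_mem_extN_of_nonadj (c : (Gdel G v).ConnectedComponent) {W : Finset V}
    (h : ∀ w ∈ W, ¬ G.Adj v w) : vcopy G v c ∉ extN (Cpart G v c) (rMap G v c W) := by
  rw [mem_extN]
  rintro ⟨-, w', hw', hadj⟩
  exact h w'.val ((mem_rMap G v).1 hw') hadj

lemma v_not_mem_extN_of_mem {W : Finset V} (h : v ∈ W) : v ∉ extN G W := by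
  rw [mem_extN]; rintro ⟨hn, -⟩; exact hn h

lemma v_not_mem_extN_of_nonadj {W : Finset V} (h : ∀ w ∈ W, ¬ G.Adj v w) :
    v ∉ extN G W := by
  rw [mem_extN]; rintro ⟨-, w, hw, hadj⟩; exact h w hw hadj

noncomputable def toW (p : ∀ c : (Gdel G v).ConnectedComponent, Finset {w : V // Pc G v c w}) :
    Finset V :=
  Finset.univ.filter (fun w => ∃ c, ∃ h : Pc G v c w, (⟨w, h⟩ : {w : V // Pc G v c w}) ∈ p c)

lemma mem_toW {p : ∀ c : (Gdel G v).ConnectedComponent, Finset {w : V // Pc G v c w}} {w : V} :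
    w ∈ toW G v p ↔ ∃ c, ∃ h : Pc G v c w, (⟨w, h⟩ : {w : V // Pc G v c w}) ∈ p c := by
  simp [toW]

lemma toW_rMap (hne : Nonempty ((Gdel G v).ConnectedComponent)) (W : Finset V) :
    toW G v (fun c => rMap G v c W) = W := by
  ext w
  rw [mem_toW]
  constructor
  · rintro ⟨c, h, hm⟩; exact (mem_rMap G v).1 hm
  · intro hw
    by_cases hwv : w = v
    · exact ⟨hne.some, Or.inl hwv, (mem_rMap G v).2 hw⟩
    · exact ⟨(Gdel G v).connectedComponentMk ⟨w, hwv⟩, Or.inr ⟨hwv, rfl⟩, (mem_rMap G v).2 hw⟩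

lemma rMap_toW (p : ∀ c : (Gdel G v).ConnectedComponent, Finset {w : V // Pc G v c w})
    (hp : (∀ c, vcopy G v c ∈ p c) ∨ (∀ c, vcopy G v c ∉ p c))
    (c : (Gdel G v).ConnectedComponent) : rMap G v c (toW G v p) = p c := by
  ext u
  rw [mem_rMap, mem_toW]
  by_cases hu : u.val = v
  · have hu' : u = vcopy G v c := Subtype.ext hu
    rcases hp with h | h
    · exact ⟨fun _ => hu' ▸ h c, fun hm => ⟨c, u.2, hm⟩⟩
    · constructor
      · rintro ⟨c', h', hm⟩
        exact absurd (show vcopy G v c' ∈ p c' from (Subtype.ext hu : (⟨u.val, h'⟩ : {w : V // Pc G v c' w}) = vcopy G v c') ▸ hm) (h c')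
      · intro hm; exact absurd (hu' ▸ hm) (h c)
  · constructor
    · rintro ⟨c', h', hm⟩
      have hc' : (Gdel G v).connectedComponentMk ⟨u.val, hu⟩ = c' := (Pc_iff G v c' hu).1 h'
      have hc : (Gdel G v).connectedComponentMk ⟨u.val, hu⟩ = c := (Pc_iff G v c hu).1 u.2
      obtain rfl : c' = c := hc'.symm.trans hc
      exact (show (⟨u.val, h'⟩ : {w : V // Pc G v c' w}) = u from Subtype.ext rfl) ▸ hm
    · intro hm
      exact ⟨c, u.2, show (⟨u.val, u.2⟩ : {w : V // Pc G v c w}) ∈ p c from hm⟩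

end Piece

section Conv
variable {V : Type} [Fintype V] (G : SimpleGraph V) (v : V)

lemma sum_filter_eq_sum_piFinset
    (hne : Nonempty ((Gdel G v).ConnectedComponent))
    (s : Finset (Finset V))
    (t : ∀ c : (Gdel G v).ConnectedComponent, Finset (Finset {w : V // Pc G v c w}))
    (h1 : ∀ W ∈ s, ∀ c, rMap G v c W ∈ t c)
    (h2 : ∀ p : (∀ c : (Gdel G v).ConnectedComponent, Finset {w : V // Pc G v c w}),
      (∀ c, p c ∈ t c) → toW G v p ∈ s)
    (hcons : ∀ p : (∀ c : (Gdel G v).ConnectedComponent, Finset {w : V // Pc G v c w}),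
      (∀ c, p c ∈ t c) → (∀ c, vcopy G v c ∈ p c) ∨ (∀ c, vcopy G v c ∉ p c))
    (f : Finset V → ℝ) (g : ∀ c : (Gdel G v).ConnectedComponent,
      Finset {w : V // Pc G v c w} → ℝ)
    (hfg : ∀ W ∈ s, f W = ∏ c, g c (rMap G v c W)) :
    ∑ W ∈ s, f W = ∑ p ∈ Fintype.piFinset t, ∏ c, g c (p c) := by
  refine Finset.sum_nbij' (fun W c => rMap G v c W) (toW G v) ?_ ?_ ?_ ?_ hfg
  · intro W hW
    rw [Fintype.mem_piFinset]
    exact fun c => h1 W hW c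
  · intro p hp
    exact h2 p (fun c => Fintype.mem_piFinset.1 hp c)
  · intro W _; exact toW_rMap G v hne W
  · intro p hp
    funext c
    exact rMap_toW G v p (hcons p (fun c => Fintype.mem_piFinset.1 hp c)) c

end Conv

set_option maxHeartbeats 2000000 in
theorem J_cut_vertex {V : Type} [Fintype V] (G : SimpleGraph V) (v : V)
    (hconn : G.Connected)
    (hcut : 2 ≤ Fintype.card ((Gdel G v).ConnectedComponent)) (x y : ℝ) :
    x ^ (Fintype.card ((Gdel G v).ConnectedComponent) - 1) * JP G x y
      = (∏ c : (Gdel G v).ConnectedComponent,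
          ∑ W ∈ Finset.univ.filter (fun W => vcopy G v c ∈ W),
            x ^ W.card * y ^ (extN (Cpart G v c) W).card)
        + x ^ (Fintype.card ((Gdel G v).ConnectedComponent) - 1) * y *
            ∏ c : (Gdel G v).ConnectedComponent, JP (Gdel (Cpart G v c) (vcopy G v c)) x y
        + x ^ (Fintype.card ((Gdel G v).ConnectedComponent) - 1) * (1 - y) *
            ∏ c : (Gdel G v).ConnectedComponent,
              ∑ W ∈ Finset.univ.filter
                  (fun W => vcopy G v c ∉ W ∧ ∀ w ∈ W, ¬ (Cpart G v c).Adj (vcopy G v c) w),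
                x ^ W.card * y ^ (extN (Cpart G v c) W).card := by
  have hne : Nonempty ((Gdel G v).ConnectedComponent) := by
    rw [← Fintype.card_pos_iff]; omega
  set l : ℕ := Fintype.card ((Gdel G v).ConnectedComponent) with hldef
  -- Term 1
  have term1 : (∏ c : (Gdel G v).ConnectedComponent,
          ∑ W ∈ Finset.univ.filter (fun W => vcopy G v c ∈ W),
            x ^ W.card * y ^ (extN (Cpart G v c) W).card)
      = ∑ W ∈ Finset.univ.filter (fun W : Finset V => v ∈ W),
          x ^ (W.card + (l - 1)) * y ^ (extN G W).card := by
    rw [Finset.prod_univ_sum]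
    refine (sum_filter_eq_sum_piFinset G v hne
      (Finset.univ.filter (fun W : Finset V => v ∈ W))
      (fun c => Finset.univ.filter
        (fun W : Finset {w : V // Pc G v c w} => vcopy G v c ∈ W))
      ?_ ?_ ?_
      (fun W => x ^ (W.card + (l - 1)) * y ^ (extN G W).card)
      (fun c Wc => x ^ Wc.card * y ^ (extN (Cpart G v c) Wc).card)
      ?_).symm
    · intro W hW c
      rw [Finset.mem_filter] at hW ⊢
      exact ⟨Finset.mem_univ _, (mem_rMap G v).2 hW.2⟩
    · intro p hp
      rw [Finset.mem_filter]
      refine ⟨Finset.mem_univ _, (mem_toW G v).2 ⟨hne.some, Or.inl rfl, ?_⟩⟩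
      exact (Finset.mem_filter.1 (hp hne.some)).2
    · intro p hp
      exact Or.inl (fun c => (Finset.mem_filter.1 (hp c)).2)
    · intro W hW
      rw [Finset.mem_filter] at hW
      replace hW := hW.2
      rw [Finset.prod_mul_distrib, Finset.prod_pow_eq_pow_sum, Finset.prod_pow_eq_pow_sum]
      have h1 : ∑ c : (Gdel G v).ConnectedComponent, (rMap G v c W).card = W.card + (l - 1) := by
        have := sum_card_rMap_mem G v W hW
        omega
      have h2 : ∑ c : (Gdel G v).ConnectedComponent, (extN (Cpart G v c) (rMap G v c W)).card
          = (extN G W).card := by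
        have : ∀ c : (Gdel G v).ConnectedComponent,
            (extN (Cpart G v c) (rMap G v c W)).card
              = ((extN (Cpart G v c) (rMap G v c W)).erase (vcopy G v c)).card := fun c => by
          rw [Finset.erase_eq_of_notMem (vcopy_not_mem_extN_of_mem G v c hW)]
        rw [Finset.sum_congr rfl (fun c _ => this c), sum_card_extN,
          Finset.erase_eq_of_notMem (v_not_mem_extN_of_mem G v hW)]
      rw [h1, h2]
  -- Term 2
  have term2 : (∏ c : (Gdel G v).ConnectedComponent, JP (Gdel (Cpart G v c) (vcopy G v c)) x y)
      = ∑ W ∈ Finset.univ.filter (fun W : Finset V => v ∉ W),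
          x ^ W.card * y ^ ((extN G W).erase v).card := by
    have hJP : ∀ c : (Gdel G v).ConnectedComponent,
        JP (Gdel (Cpart G v c) (vcopy G v c)) x y
          = ∑ W ∈ Finset.univ.filter
              (fun W : Finset {w : V // Pc G v c w} => vcopy G v c ∉ W),
              x ^ W.card * y ^ ((extN (Cpart G v c) W).erase (vcopy G v c)).card :=
      fun c => JP_del _ _ x y
    refine (Finset.prod_congr rfl (fun c _ => hJP c)).trans ?_
    rw [Finset.prod_univ_sum]
    refine (sum_filter_eq_sum_piFinset G v hne
      (Finset.univ.filter (fun W : Finset V => v ∉ W))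
      (fun c => Finset.univ.filter
        (fun W : Finset {w : V // Pc G v c w} => vcopy G v c ∉ W))
      ?_ ?_ ?_
      (fun W => x ^ W.card * y ^ ((extN G W).erase v).card)
      (fun c Wc => x ^ Wc.card * y ^ ((extN (Cpart G v c) Wc).erase (vcopy G v c)).card)
      ?_).symm
    · intro W hW c
      rw [Finset.mem_filter] at hW ⊢
      exact ⟨Finset.mem_univ _, fun hm => hW.2 ((mem_rMap G v).1 hm)⟩
    · intro p hp
      rw [Finset.mem_filter]
      refine ⟨Finset.mem_univ _, fun hv => ?_⟩
      obtain ⟨c, h, hm⟩ := (mem_toW G v).1 hv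
      exact (Finset.mem_filter.1 (hp c)).2
        ((show (⟨v, h⟩ : {w : V // Pc G v c w}) = vcopy G v c from Subtype.ext rfl) ▸ hm)
    · intro p hp; exact Or.inr (fun c => (Finset.mem_filter.1 (hp c)).2)
    · intro W hW
      rw [Finset.mem_filter] at hW
      rw [Finset.prod_mul_distrib, Finset.prod_pow_eq_pow_sum, Finset.prod_pow_eq_pow_sum,
        sum_card_rMap_notmem G v W hW.2, sum_card_extN]
  -- Term 3
  have term3 : (∏ c : (Gdel G v).ConnectedComponent,
          ∑ W ∈ Finset.univ.filter
              (fun W => vcopy G v c ∉ W ∧ ∀ w ∈ W, ¬ (Cpart G v c).Adj (vcopy G v c) w),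
            x ^ W.card * y ^ (extN (Cpart G v c) W).card)
      = ∑ W ∈ Finset.univ.filter (fun W : Finset V => v ∉ W ∧ ∀ w ∈ W, ¬ G.Adj v w),
          x ^ W.card * y ^ (extN G W).card := by
    rw [Finset.prod_univ_sum]
    refine (sum_filter_eq_sum_piFinset G v hne
      (Finset.univ.filter (fun W : Finset V => v ∉ W ∧ ∀ w ∈ W, ¬ G.Adj v w))
      (fun c => Finset.univ.filter
        (fun W : Finset {w : V // Pc G v c w} =>
          vcopy G v c ∉ W ∧ ∀ w ∈ W, ¬ (Cpart G v c).Adj (vcopy G v c) w))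
      ?_ ?_ ?_
      (fun W => x ^ W.card * y ^ (extN G W).card)
      (fun c Wc => x ^ Wc.card * y ^ (extN (Cpart G v c) Wc).card)
      ?_).symm
    · intro W hW c
      rw [Finset.mem_filter] at hW ⊢
      obtain ⟨-, hW⟩ := hW
      refine ⟨Finset.mem_univ _,
        fun hm => hW.1 ((mem_rMap G v).1 hm), fun w' hw' hadj => ?_⟩
      exact hW.2 w'.val ((mem_rMap G v).1 hw') hadj
    · intro p hp
      replace hp := fun c => (Finset.mem_filter.1 (hp c)).2
      rw [Finset.mem_filter]
      refine ⟨Finset.mem_univ _, ?_, ?_⟩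
      · intro hv
        obtain ⟨c, h, hm⟩ := (mem_toW G v).1 hv
        exact (hp c).1 ((show (⟨v, h⟩ : {w : V // Pc G v c w}) = vcopy G v c from
          Subtype.ext rfl) ▸ hm)
      · intro w hw hadj
        obtain ⟨c, h, hm⟩ := (mem_toW G v).1 hw
        exact (hp c).2 ⟨w, h⟩ hm ((Cpart_adj G v c (vcopy G v c) ⟨w, h⟩).2 hadj)
    · intro p hp
      exact Or.inr (fun c => (Finset.mem_filter.1 (hp c)).2.1)
    · intro W hW
      rw [Finset.mem_filter] at hW
      replace hW := hW.2
      rw [Finset.prod_mul_distrib, Finset.prod_pow_eq_pow_sum, Finset.prod_pow_eq_pow_sum,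
        sum_card_rMap_notmem G v W hW.1]
      have h2 : ∑ c : (Gdel G v).ConnectedComponent, (extN (Cpart G v c) (rMap G v c W)).card
          = (extN G W).card := by
        have : ∀ c : (Gdel G v).ConnectedComponent,
            (extN (Cpart G v c) (rMap G v c W)).card
              = ((extN (Cpart G v c) (rMap G v c W)).erase (vcopy G v c)).card := fun c => by
          rw [Finset.erase_eq_of_notMem (vcopy_not_mem_extN_of_nonadj G v c hW.2)]
        rw [Finset.sum_congr rfl (fun c _ => this c), sum_card_extN,
          Finset.erase_eq_of_notMem (v_not_mem_extN_of_nonadj G v hW.2)]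
      rw [h2]
  -- Splitting of JP G
  have split : JP G x y
      = (∑ W ∈ Finset.univ.filter (fun W : Finset V => v ∈ W),
          x ^ W.card * y ^ (extN G W).card)
        + y * (∑ W ∈ Finset.univ.filter (fun W : Finset V => v ∉ W),
            x ^ W.card * y ^ ((extN G W).erase v).card)
        + (1 - y) * (∑ W ∈ Finset.univ.filter (fun W : Finset V => v ∉ W ∧ ∀ w ∈ W, ¬ G.Adj v w),
            x ^ W.card * y ^ (extN G W).card) := by
    rw [JP, ← Finset.sum_filter_add_sum_filter_not Finset.univ (fun W : Finset V => v ∈ W)]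
    have pointwise : ∀ W ∈ Finset.univ.filter (fun W : Finset V => v ∉ W),
        x ^ W.card * y ^ (extN G W).card
          = y * (x ^ W.card * y ^ ((extN G W).erase v).card)
            + (1 - y) * (if (∀ w ∈ W, ¬ G.Adj v w)
                then x ^ W.card * y ^ (extN G W).card else 0) := by
      intro W hW
      have hvW : v ∉ W := (Finset.mem_filter.1 hW).2
      by_cases hadj : ∀ w ∈ W, ¬ G.Adj v w
      · rw [if_pos hadj, Finset.erase_eq_of_notMem (v_not_mem_extN_of_nonadj G v hadj)]
        ring
      · rw [if_neg hadj]
        push_neg at hadj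
        obtain ⟨w, hw, hvw⟩ := hadj
        have hv : v ∈ extN G W := (mem_extN G W v).2 ⟨hvW, w, hw, hvw⟩
        rw [← Finset.card_erase_add_one hv, pow_succ]
        ring
    rw [Finset.sum_congr rfl pointwise, Finset.sum_add_distrib, ← Finset.mul_sum,
      ← Finset.mul_sum, ← Finset.sum_filter, Finset.filter_filter]
    ring
  rw [split, term1, term2, term3]
  have hS1 : x ^ (l - 1) * (∑ W ∈ Finset.univ.filter (fun W : Finset V => v ∈ W),
        x ^ W.card * y ^ (extN G W).card)
      = ∑ W ∈ Finset.univ.filter (fun W : Finset V => v ∈ W),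
          x ^ (W.card + (l - 1)) * y ^ (extN G W).card := by
    rw [Finset.mul_sum]
    exact Finset.sum_congr rfl (fun W _ => by rw [pow_add]; ring)
  rw [← hS1]
  ring
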